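/- Fix 0 < α < 1 and an integer b > 1, and let f(x) = ∑_{j=0}^∞ b^{-jα} cos(b^j x). There is an absolute constant c > 0 and c(α,b) = c(α)(b^{-α} + b^{α−1}) such that for every integer k ≥ 0 and every x ∈ ℝ: ∫_{b^{-k}/2}^{2b^{-k}} |f(x+h) − f(x−h)| h^{−(1+α)} dh ≥ c |sin(b^k x)| − c(α,b). -/

import Mathlib

open MeasureTheory

lemma sin_lb_aux {t : ℝ} (h1 : 1/2 ≤ t) (h2 : t ≤ 2) : Real.sin (1/2) ≤ Real.sin t := by
  have hpi := Real.pi_gt_three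
  rcases le_total t (Real.pi/2) with h | h
  · exact Real.strictMonoOn_sin.monotoneOn ⟨by linarith, by linarith⟩ ⟨by linarith, h⟩ h1
  · rw [← Real.sin_pi_sub t]
    exact Real.strictMonoOn_sin.monotoneOn ⟨by linarith, by linarith⟩
      ⟨by linarith, by linarith⟩ (by linarith)

set_option maxHeartbeats 2000000 in
/-- Lower bound without cancellation: for `f(x) = ∑_j b^{-jα} cos(b^j x)` there are
an absolute constant `c > 0` and a constant `cα = c(α) > 0` with
`∫_{b^{-k}/2}^{2b^{-k}} |f(x+h) - f(x-h)| h^{-(1+α)} dh ≥ c|sin(b^k x)| - cα(b^{-α} + b^{α-1})`. -/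
theorem stmt17 :
    ∃ c : ℝ, 0 < c ∧ ∀ α : ℝ, 0 < α → α < 1 →
      ∃ cα : ℝ, 0 < cα ∧ ∀ b : ℕ, 1 < b → ∀ k : ℕ, ∀ x : ℝ,
        (∫ h in ((b : ℝ) ^ (-(k : ℝ)) / 2)..(2 * (b : ℝ) ^ (-(k : ℝ))),
            |(∑' j : ℕ, (b : ℝ) ^ (-(j : ℝ) * α) * Real.cos ((b : ℝ) ^ (j : ℝ) * (x + h))) -
              ∑' j : ℕ, (b : ℝ) ^ (-(j : ℝ) * α) * Real.cos ((b : ℝ) ^ (j : ℝ) * (x - h))| /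
            h ^ (1 + α)) ≥
          c * |Real.sin ((b : ℝ) ^ (k : ℝ) * x)| - cα * ((b : ℝ) ^ (-α) + (b : ℝ) ^ (α - 1)) := by
  have hs : 0 < Real.sin (1/2) :=
    Real.sin_pos_of_pos_of_lt_pi (by norm_num) (by nlinarith [Real.pi_gt_three])
  refine ⟨3/4 * Real.sin (1/2), by positivity, ?_⟩
  intro α hα0 hα1
  have h2a : (2:ℝ)^(-α) < 1 := Real.rpow_lt_one_of_one_lt_of_neg one_lt_two (by linarith)
  have h2b : (2:ℝ)^(α-1) < 1 := Real.rpow_lt_one_of_one_lt_of_neg one_lt_two (by linarith)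
  have h2a0 : (0:ℝ) < (2:ℝ)^(-α) := Real.rpow_pos_of_pos (by norm_num) _
  have h2b0 : (0:ℝ) < (2:ℝ)^(α-1) := Real.rpow_pos_of_pos (by norm_num) _
  refine ⟨24/(1-(2:ℝ)^(-α)) + 24/(1-(2:ℝ)^(α-1)),
    add_pos (div_pos (by norm_num) (by linarith)) (div_pos (by norm_num) (by linarith)), ?_⟩
  intro b hb k x
  set bR : ℝ := (b:ℝ) with hbRdef
  have hb2 : (2:ℝ) ≤ bR := by
    have : (2:ℕ) ≤ b := hb
    rw [hbRdef]; exact_mod_cast this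
  have hb0 : (0:ℝ) < bR := by linarith
  have hb1 : (1:ℝ) < bR := by linarith
  set r : ℝ := bR ^ (-α) with hrdef
  set p : ℝ := bR ^ (α-1) with hpdef
  set q : ℝ := bR ^ (1-α) with hqdef
  set B : ℝ := bR ^ (-(k:ℝ)) with hBdef
  have hr0 : 0 < r := Real.rpow_pos_of_pos hb0 _
  have hr1 : r < 1 := Real.rpow_lt_one_of_one_lt_of_neg hb1 (by linarith)
  have hp0 : 0 < p := Real.rpow_pos_of_pos hb0 _
  have hp1 : p < 1 := Real.rpow_lt_one_of_one_lt_of_neg hb1 (by linarith)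
  have hq1 : 1 < q := (Real.one_lt_rpow_iff_of_pos hb0).mpr (Or.inl ⟨hb1, by linarith⟩)
  have hB0 : 0 < B := Real.rpow_pos_of_pos hb0 _
  have hrle : r ≤ (2:ℝ)^(-α) := by
    rw [hrdef, Real.rpow_neg hb0.le, Real.rpow_neg (by norm_num : (0:ℝ) ≤ 2)]
    exact inv_anti₀ (Real.rpow_pos_of_pos two_pos α)
      (Real.rpow_le_rpow (by norm_num) hb2 hα0.le)
  have hple : p ≤ (2:ℝ)^(α-1) := by
    rw [hpdef, show α - 1 = -(1-α) by ring, Real.rpow_neg hb0.le,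
      Real.rpow_neg (by norm_num : (0:ℝ) ≤ 2)]
    exact inv_anti₀ (Real.rpow_pos_of_pos two_pos _)
      (Real.rpow_le_rpow (by norm_num) hb2 (by linarith))
  have hpq : p * q = 1 := by rw [hpdef, hqdef, ← Real.rpow_add hb0]; norm_num
  -- rpow to pow conversions
  have hpn : ∀ j : ℕ, bR ^ ((j:ℝ)) = bR ^ j := fun j => Real.rpow_natCast bR j
  have hpow : ∀ j : ℕ, bR ^ (-(j:ℝ)*α) = r ^ j := by
    intro j
    rw [hrdef, ← Real.rpow_natCast (bR ^ (-α)) j, ← Real.rpow_mul hb0.le]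
    congr 1; ring
  have hrk : B ^ α = r ^ k := by
    rw [hBdef, ← Real.rpow_mul hb0.le, ← hpow k]
  have hqk : q ^ k * B = r ^ k := by
    rw [hqdef, hBdef, ← Real.rpow_natCast (bR ^ (1-α)) k, ← Real.rpow_mul hb0.le,
      ← Real.rpow_add hb0, ← hpow k]
    congr 1; ring
  have hBk : bR ^ k * B = 1 := by
    rw [hBdef, ← hpn k, ← Real.rpow_add hb0]
    simp
  have hD : B ^ (1+α) = B * r ^ k := by
    rw [Real.rpow_add hB0, Real.rpow_one, hrk]
  set T : ℝ := (2:ℝ) ^ (1+α) with hTdef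
  have hT0 : 0 < T := Real.rpow_pos_of_pos two_pos _
  have hT4 : T ≤ 4 := by
    have h1 : T ≤ (2:ℝ) ^ (2:ℝ) := Real.rpow_le_rpow_of_exponent_le one_le_two (by linarith)
    have h2 : (2:ℝ) ^ (2:ℝ) = 4 := by
      rw [show (2:ℝ) ^ (2:ℝ) = (2:ℝ) ^ ((2:ℕ):ℝ) by norm_num, Real.rpow_natCast]; norm_num
    linarith
  have hE1 : (2*B) ^ (1+α) = T * (B * r ^ k) := by
    rw [Real.mul_rpow (by norm_num) hB0.le, hD]
  have hE2 : (B/2) ^ (1+α) = (B * r ^ k) / T := by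
    rw [Real.div_rpow hB0.le (by norm_num), hD]
  -- summability of the series defining f
  have hgeo : Summable (fun j : ℕ => r ^ j) := summable_geometric_of_lt_one hr0.le hr1
  have hsum : ∀ y : ℝ, Summable (fun j : ℕ => bR ^ (-(j:ℝ)*α) * Real.cos (bR ^ (j:ℝ) * y)) := by
    intro y
    apply Summable.of_norm_bounded hgeo
    intro j
    rw [Real.norm_eq_abs, abs_mul, hpow j, abs_of_nonneg (pow_nonneg hr0.le j)]
    exact mul_le_of_le_one_right (pow_nonneg hr0.le j) (Real.abs_cos_le_one _)
  -- the difference series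
  have hgb : ∀ (j : ℕ) (h : ℝ),
      |(-2) * r ^ j * Real.sin (bR ^ j * x) * Real.sin (bR ^ j * h)| ≤ 2 * r ^ j := by
    intro j h
    rw [abs_mul, abs_mul, abs_mul]
    have e1 : |(-2:ℝ)| = 2 := by norm_num
    have e2 : |r ^ j| = r ^ j := abs_of_nonneg (pow_nonneg hr0.le j)
    rw [e1, e2, mul_assoc]
    exact mul_le_of_le_one_right (by positivity)
      (mul_le_one₀ (Real.abs_sin_le_one _) (abs_nonneg _) (Real.abs_sin_le_one _))
  have hgs : ∀ h : ℝ, Summable (fun j : ℕ =>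
      (-2) * r ^ j * Real.sin (bR ^ j * x) * Real.sin (bR ^ j * h)) := by
    intro h
    apply Summable.of_norm_bounded (hgeo.mul_left 2)
    intro j
    simpa only [Real.norm_eq_abs] using hgb j h
  have hF : ∀ h : ℝ,
      (∑' j : ℕ, bR ^ (-(j:ℝ)*α) * Real.cos (bR ^ (j:ℝ) * (x + h))) -
        (∑' j : ℕ, bR ^ (-(j:ℝ)*α) * Real.cos (bR ^ (j:ℝ) * (x - h))) =
      ∑' j : ℕ, (-2) * r ^ j * Real.sin (bR ^ j * x) * Real.sin (bR ^ j * h) := by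
    intro h
    rw [← Summable.tsum_sub (hsum (x+h)) (hsum (x-h))]
    apply tsum_congr
    intro j
    rw [hpow j, hpn j, mul_add, mul_sub, Real.cos_add, Real.cos_sub]
    ring
  -- convert the sine in the goal
  rw [ge_iff_le, hpn k]
  have hq1' : (0:ℝ) < q - 1 := by linarith
  have h1r : (0:ℝ) < 1 - r := by linarith
  have hrk0 : (0:ℝ) < r ^ k := pow_pos hr0 k
  have hrbq : r * bR = q := by
    rw [hrdef, hqdef, show (1 - α) = -α + 1 by ring, Real.rpow_add hb0, Real.rpow_one]
  have hqk' : q ^ k = r ^ k / B := (eq_div_iff hB0.ne').mpr hqk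
  have hab : B/2 ≤ 2*B := by linarith
  have hXq : (0:ℝ) ≤ q ^ k / (q-1) := div_nonneg (pow_nonneg (by linarith) k) hq1'.le
  have hXr : (0:ℝ) ≤ r / (1-r) := div_nonneg hr0.le h1r.le
  set m : ℝ := (2 * r ^ k * Real.sin (1/2) * |Real.sin (bR ^ k * x)|) / ((2*B)^(1+α)) -
      (2 * (2*B) * (q ^ k/(q-1)) + 2 * r ^ k * (r/(1-r))) / ((B/2)^(1+α)) with hmdef
  have hP0 : (0:ℝ) ≤ 2 * r ^ k * Real.sin (1/2) * |Real.sin (bR ^ k * x)| :=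
    mul_nonneg (mul_nonneg (by positivity) hs.le) (abs_nonneg _)
  have hQ20 : (0:ℝ) ≤ 2 * (2*B) * (q ^ k/(q-1)) + 2 * r ^ k * (r/(1-r)) := by
    have h1 : (0:ℝ) ≤ 2 * (2*B) * (q ^ k/(q-1)) := mul_nonneg (by positivity) hXq
    have h2 : (0:ℝ) ≤ 2 * r ^ k * (r/(1-r)) := mul_nonneg (by positivity) hXr
    linarith
  -- pointwise lower bound by the constant m
  have key : ∀ h ∈ Set.Icc (B/2) (2*B),
      m ≤ |(∑' j : ℕ, bR ^ (-(j:ℝ)*α) * Real.cos (bR ^ ((j:ℝ)) * (x + h))) -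
        ∑' j : ℕ, bR ^ (-(j:ℝ)*α) * Real.cos (bR ^ ((j:ℝ)) * (x - h))| / h ^ (1+α) := by
    intro h hmem
    rw [hF h]
    have hh0 : 0 < h := lt_of_lt_of_le (by positivity) hmem.1
    have hden : 0 < h^(1+α) := Real.rpow_pos_of_pos hh0 _
    have hsplit := Summable.tsum_eq_add_tsum_ite (hgs h) k
    have hsum_ite : Summable (fun j : ℕ => |if j = k then (0:ℝ) else
        (-2) * r ^ j * Real.sin (bR ^ j * x) * Real.sin (bR ^ j * h)|) := by
      apply Summable.of_nonneg_of_le (fun j => abs_nonneg _) (fun j => ?_) (hgeo.mul_left 2)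
      by_cases hj : j = k
      · rw [if_pos hj, abs_zero]
        positivity
      · rw [if_neg hj]
        exact hgb j h
    have habs : |∑' j : ℕ, if j = k then (0:ℝ) else
          (-2) * r ^ j * Real.sin (bR ^ j * x) * Real.sin (bR ^ j * h)| ≤
        ∑' j : ℕ, |if j = k then (0:ℝ) else
          (-2) * r ^ j * Real.sin (bR ^ j * x) * Real.sin (bR ^ j * h)| := by
      have hsum_norm : Summable (fun j : ℕ => ‖if j = k then (0:ℝ) else
          (-2) * r ^ j * Real.sin (bR ^ j * x) * Real.sin (bR ^ j * h)‖) := by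
        simpa only [Real.norm_eq_abs] using hsum_ite
      simpa only [Real.norm_eq_abs] using norm_tsum_le_tsum_norm hsum_norm
    have hsp := Summable.sum_add_tsum_nat_add (f := fun j : ℕ => |if j = k then (0:ℝ) else
        (-2) * r ^ j * Real.sin (bR ^ j * x) * Real.sin (bR ^ j * h)|) (k+1) hsum_ite
    have hgeoq : ∑ j ∈ Finset.range k, q ^ j ≤ q ^ k / (q - 1) := by
      rw [geom_sum_eq hq1.ne']
      exact div_le_div_of_nonneg_right (by linarith [pow_pos (by linarith : (0:ℝ) < q) k]) hq1'.le
    have hhead : ∑ j ∈ Finset.range (k+1), |if j = k then (0:ℝ) else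
          (-2) * r ^ j * Real.sin (bR ^ j * x) * Real.sin (bR ^ j * h)| ≤
        2 * h * (q ^ k/(q-1)) := by
      rw [Finset.sum_range_succ, if_pos rfl, abs_zero, add_zero]
      have hterm : ∀ j ∈ Finset.range k, |if j = k then (0:ℝ) else
          (-2) * r ^ j * Real.sin (bR ^ j * x) * Real.sin (bR ^ j * h)| ≤ 2 * h * q ^ j := by
        intro j hj
        have hjk : j ≠ k := Nat.ne_of_lt (Finset.mem_range.mp hj)
        rw [if_neg hjk, abs_mul, abs_mul, abs_mul, show |(-2:ℝ)| = 2 by norm_num,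
          abs_of_nonneg (pow_nonneg hr0.le j)]
        have h2 : |Real.sin (bR ^ j * h)| ≤ bR ^ j * h := by
          have h3 := Real.abs_sin_le_abs (x := bR ^ j * h)
          rwa [abs_of_nonneg (by positivity : (0:ℝ) ≤ bR ^ j * h)] at h3
        calc 2 * r ^ j * |Real.sin (bR ^ j * x)| * |Real.sin (bR ^ j * h)|
            ≤ (2 * r ^ j * 1) * (bR ^ j * h) := by
              apply mul_le_mul ?_ h2 (abs_nonneg _) (by positivity)
              exact mul_le_mul_of_nonneg_left (Real.abs_sin_le_one _) (by positivity)
          _ = 2 * h * (r * bR) ^ j := by rw [mul_pow]; ring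
          _ = 2 * h * q ^ j := by rw [hrbq]
      calc ∑ j ∈ Finset.range k, |if j = k then (0:ℝ) else
            (-2) * r ^ j * Real.sin (bR ^ j * x) * Real.sin (bR ^ j * h)|
          ≤ ∑ j ∈ Finset.range k, 2 * h * q ^ j := Finset.sum_le_sum hterm
        _ = 2 * h * ∑ j ∈ Finset.range k, q ^ j := by rw [Finset.mul_sum]
        _ ≤ 2 * h * (q ^ k/(q-1)) := mul_le_mul_of_nonneg_left hgeoq (by positivity)
    have htail : (∑' i : ℕ, |if (i+(k+1)) = k then (0:ℝ) else
          (-2) * r ^ (i+(k+1)) * Real.sin (bR ^ (i+(k+1)) * x) * Real.sin (bR ^ (i+(k+1)) * h)|) ≤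
        2 * r ^ k * (r/(1-r)) := by
      have hb1' : ∀ i : ℕ, |if (i+(k+1)) = k then (0:ℝ) else
          (-2) * r ^ (i+(k+1)) * Real.sin (bR ^ (i+(k+1)) * x) * Real.sin (bR ^ (i+(k+1)) * h)| ≤
          (2 * r ^ (k+1)) * r ^ i := by
        intro i
        rw [if_neg (by omega)]
        calc |(-2) * r ^ (i+(k+1)) * Real.sin (bR ^ (i+(k+1)) * x) *
              Real.sin (bR ^ (i+(k+1)) * h)| ≤ 2 * r ^ (i+(k+1)) := hgb _ h
          _ = (2 * r ^ (k+1)) * r ^ i := by rw [pow_add]; ring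
      calc (∑' i : ℕ, |if (i+(k+1)) = k then (0:ℝ) else
            (-2) * r ^ (i+(k+1)) * Real.sin (bR ^ (i+(k+1)) * x) * Real.sin (bR ^ (i+(k+1)) * h)|)
          ≤ ∑' i : ℕ, (2 * r ^ (k+1)) * r ^ i :=
            Summable.tsum_le_tsum hb1' ((summable_nat_add_iff (k+1)).mpr hsum_ite) (hgeo.mul_left _)
        _ = (2 * r ^ (k+1)) * (1-r)⁻¹ := by
            rw [tsum_mul_left, tsum_geometric_of_lt_one hr0.le hr1]
        _ = 2 * r ^ k * (r/(1-r)) := by rw [pow_succ, div_eq_mul_inv]; ring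
    have hkh1 : 1/2 ≤ bR ^ k * h := by
      linarith only [mul_le_mul_of_nonneg_left hmem.1 (pow_pos hb0 k).le, hBk]
    have hkh2 : bR ^ k * h ≤ 2 := by
      linarith only [mul_le_mul_of_nonneg_left hmem.2 (pow_pos hb0 k).le, hBk]
    have hsin : Real.sin (1/2) ≤ |Real.sin (bR ^ k * h)| :=
      le_trans (sin_lb_aux hkh1 hkh2) (le_abs_self _)
    have hgk : 2 * r ^ k * Real.sin (1/2) * |Real.sin (bR ^ k * x)| ≤
        |(-2) * r ^ k * Real.sin (bR ^ k * x) * Real.sin (bR ^ k * h)| := by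
      rw [abs_mul, abs_mul, abs_mul, show |(-2:ℝ)| = 2 by norm_num,
        abs_of_nonneg (pow_nonneg hr0.le k)]
      calc 2 * r ^ k * Real.sin (1/2) * |Real.sin (bR ^ k * x)|
          = 2 * r ^ k * |Real.sin (bR ^ k * x)| * Real.sin (1/2) := by ring
        _ ≤ 2 * r ^ k * |Real.sin (bR ^ k * x)| * |Real.sin (bR ^ k * h)| :=
            mul_le_mul_of_nonneg_left hsin (by positivity)
    have hT'le : |∑' j : ℕ, if j = k then (0:ℝ) else
          (-2) * r ^ j * Real.sin (bR ^ j * x) * Real.sin (bR ^ j * h)| ≤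
        2 * h * (q ^ k/(q-1)) + 2 * r ^ k * (r/(1-r)) := by
      calc |∑' j : ℕ, if j = k then (0:ℝ) else
            (-2) * r ^ j * Real.sin (bR ^ j * x) * Real.sin (bR ^ j * h)|
          ≤ ∑' j : ℕ, |if j = k then (0:ℝ) else
            (-2) * r ^ j * Real.sin (bR ^ j * x) * Real.sin (bR ^ j * h)| := habs
        _ = _ + _ := hsp.symm
        _ ≤ 2 * h * (q ^ k/(q-1)) + 2 * r ^ k * (r/(1-r)) := add_le_add hhead htail
    have claim1 : 2 * r ^ k * Real.sin (1/2) * |Real.sin (bR ^ k * x)| -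
        (2 * h * (q ^ k/(q-1)) + 2 * r ^ k * (r/(1-r))) ≤
        |∑' j : ℕ, (-2) * r ^ j * Real.sin (bR ^ j * x) * Real.sin (bR ^ j * h)| := by
      rw [hsplit]
      have habs2 := abs_sub_abs_le_abs_sub
        ((-2) * r ^ k * Real.sin (bR ^ k * x) * Real.sin (bR ^ k * h))
        (-(∑' j : ℕ, if j = k then (0:ℝ) else
          (-2) * r ^ j * Real.sin (bR ^ j * x) * Real.sin (bR ^ j * h)))
      rw [abs_neg, sub_neg_eq_add] at habs2
      linarith only [hgk, hT'le, habs2]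
    have hd1 : h^(1+α) ≤ (2*B)^(1+α) := Real.rpow_le_rpow hh0.le hmem.2 (by linarith)
    have hd2 : (B/2)^(1+α) ≤ h^(1+α) := Real.rpow_le_rpow (by positivity) hmem.1 (by linarith)
    have hden2 : 0 < (B/2)^(1+α) := Real.rpow_pos_of_pos (by positivity) _
    have hstep1 : (2 * r ^ k * Real.sin (1/2) * |Real.sin (bR ^ k * x)|) / ((2*B)^(1+α)) ≤
        (2 * r ^ k * Real.sin (1/2) * |Real.sin (bR ^ k * x)|) / h^(1+α) :=
      div_le_div_of_nonneg_left hP0 hden hd1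
    have hQle : 2 * h * (q ^ k/(q-1)) + 2 * r ^ k * (r/(1-r)) ≤
        2 * (2*B) * (q ^ k/(q-1)) + 2 * r ^ k * (r/(1-r)) := by
      linarith only [mul_le_mul_of_nonneg_right hmem.2 hXq]
    have hstep2 : (2 * h * (q ^ k/(q-1)) + 2 * r ^ k * (r/(1-r))) / h^(1+α) ≤
        (2 * (2*B) * (q ^ k/(q-1)) + 2 * r ^ k * (r/(1-r))) / ((B/2)^(1+α)) :=
      div_le_div₀ hQ20 hQle hden2 hd2
    have hstep3 : (2 * r ^ k * Real.sin (1/2) * |Real.sin (bR ^ k * x)| -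
        (2 * h * (q ^ k/(q-1)) + 2 * r ^ k * (r/(1-r)))) / h^(1+α) ≤
        |∑' j : ℕ, (-2) * r ^ j * Real.sin (bR ^ j * x) * Real.sin (bR ^ j * h)| / h^(1+α) :=
      div_le_div_of_nonneg_right claim1 hden.le
    rw [hmdef]
    rw [sub_div] at hstep3
    linarith only [hstep1, hstep2, hstep3]
  -- integrability of the integrand
  have hcont1 : Continuous (fun y : ℝ => ∑' j : ℕ, bR ^ (-(j:ℝ)*α) * Real.cos (bR ^ ((j:ℝ)) * y)) := by
    apply continuous_tsum (u := fun j : ℕ => r ^ j) ?_ hgeo ?_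
    · intro j
      exact continuous_const.mul (Real.continuous_cos.comp (continuous_const.mul continuous_id))
    · intro j y
      rw [Real.norm_eq_abs, abs_mul, hpow j, abs_of_nonneg (pow_nonneg hr0.le j)]
      exact mul_le_of_le_one_right (pow_nonneg hr0.le j) (Real.abs_cos_le_one _)
  have hcont2 : Continuous (fun h : ℝ => h ^ (1+α)) := by
    rw [continuous_iff_continuousAt]
    intro y
    exact Real.continuousAt_rpow_const y _ (Or.inr (by linarith))
  have hInt : IntervalIntegrable (fun h : ℝ =>
      |(∑' j : ℕ, bR ^ (-(j:ℝ)*α) * Real.cos (bR ^ ((j:ℝ)) * (x + h))) -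
        ∑' j : ℕ, bR ^ (-(j:ℝ)*α) * Real.cos (bR ^ ((j:ℝ)) * (x - h))| / h ^ (1+α))
      volume (B/2) (2*B) := by
    apply ContinuousOn.intervalIntegrable
    apply ContinuousOn.div
    · exact (((hcont1.comp (continuous_const.add continuous_id)).sub
        (hcont1.comp (continuous_const.sub continuous_id))).abs).continuousOn
    · exact hcont2.continuousOn
    · intro y hy
      rw [Set.uIcc_of_le hab] at hy
      exact (Real.rpow_pos_of_pos (lt_of_lt_of_le (by positivity) hy.1) _).ne'
  -- final arithmetic
  have e1 : (2*B - B/2) * ((2 * r ^ k * Real.sin (1/2) * |Real.sin (bR ^ k * x)|) / ((2*B)^(1+α)))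
      = 3 * Real.sin (1/2) * |Real.sin (bR ^ k * x)| / T := by
    rw [hE1]
    field_simp
    ring
  have e2 : (2*B - B/2) * ((2 * (2*B) * (q ^ k/(q-1)) + 2 * r ^ k * (r/(1-r))) / ((B/2)^(1+α)))
      = 6*T/(q-1) + 3*T*(r/(1-r)) := by
    rw [hE2, hqk']
    field_simp
    ring
  have h1p : (0:ℝ) < 1 - p := by linarith
  have h1p2 : (0:ℝ) < 1 - (2:ℝ)^(α-1) := by linarith
  have h1r2 : (0:ℝ) < 1 - (2:ℝ)^(-α) := by linarith
  have i1 : 3/4 * Real.sin (1/2) * |Real.sin (bR ^ k * x)| ≤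
      3 * Real.sin (1/2) * |Real.sin (bR ^ k * x)| / T := by
    rw [le_div_iff₀ hT0]
    have hnn : (0:ℝ) ≤ 3/4 * Real.sin (1/2) * |Real.sin (bR ^ k * x)| :=
      mul_nonneg (by positivity) (abs_nonneg _)
    linarith only [mul_le_mul_of_nonneg_left hT4 hnn]
  have hq_inv : q - 1 = (1-p)/p := by
    rw [eq_div_iff hp0.ne']
    linear_combination hpq
  have i2 : 6*T/(q-1) ≤ (24/(1-(2:ℝ)^(α-1))) * p := by
    calc 6*T/(q-1) = 6*T*p/(1-p) := by rw [hq_inv, div_div_eq_mul_div]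
      _ ≤ 24*p/(1-p) := div_le_div_of_nonneg_right
          (mul_le_mul_of_nonneg_right (by linarith only [hT4] : 6*T ≤ 24) hp0.le) h1p.le
      _ ≤ 24*p/(1-(2:ℝ)^(α-1)) := div_le_div_of_nonneg_left (by positivity) h1p2 (by linarith)
      _ = (24/(1-(2:ℝ)^(α-1))) * p := by ring
  have i3 : 3*T*(r/(1-r)) ≤ (24/(1-(2:ℝ)^(-α))) * r := by
    calc 3*T*(r/(1-r)) = 3*T*r/(1-r) := by rw [mul_div_assoc]
      _ ≤ 24*r/(1-r) := div_le_div_of_nonneg_right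
          (mul_le_mul_of_nonneg_right (by linarith only [hT4] : 3*T ≤ 24) hr0.le) h1r.le
      _ ≤ 24*r/(1-(2:ℝ)^(-α)) := div_le_div_of_nonneg_left (by positivity) h1r2 (by linarith)
      _ = (24/(1-(2:ℝ)^(-α))) * r := by ring
  have hc1p : (0:ℝ) ≤ (24/(1-(2:ℝ)^(-α))) * p :=
    mul_nonneg (div_nonneg (by norm_num) h1r2.le) hp0.le
  have hc2r : (0:ℝ) ≤ (24/(1-(2:ℝ)^(α-1))) * r :=
    mul_nonneg (div_nonneg (by norm_num) h1p2.le) hr0.le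
  have hfinal : 3/4 * Real.sin (1/2) * |Real.sin (bR ^ k * x)| -
      (24/(1-(2:ℝ)^(-α)) + 24/(1-(2:ℝ)^(α-1))) * (r + p) ≤ (2*B - B/2) * m := by
    rw [hmdef, mul_sub, e1, e2]
    linarith only [i1, i2, i3, hc1p, hc2r]
  calc 3/4 * Real.sin (1/2) * |Real.sin (bR ^ k * x)| -
      (24/(1-(2:ℝ)^(-α)) + 24/(1-(2:ℝ)^(α-1))) * (r + p) ≤ (2*B - B/2) * m := hfinal
    _ = ∫ _ in (B/2)..(2*B), m := by rw [intervalIntegral.integral_const, smul_eq_mul]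
    _ ≤ ∫ h in (B/2)..(2*B),
        |(∑' j : ℕ, bR ^ (-(j:ℝ)*α) * Real.cos (bR ^ ((j:ℝ)) * (x + h))) -
          ∑' j : ℕ, bR ^ (-(j:ℝ)*α) * Real.cos (bR ^ ((j:ℝ)) * (x - h))| / h ^ (1+α) :=
      intervalIntegral.integral_mono_on hab intervalIntegrable_const hInt key
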